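/- arXiv:1202.1515 — 2 statements merged into one kernel-verified Lean document; each statement's English description precedes it below -/
import Mathlib

section
/- Let R be a commutative ring and let n, N be positive integers. Let A be a square matrix over R indexed by (Fin n) × (Fin N), regarded as an n×n array of N×N blocks B_{ij}, and suppose each block has constant row sums: there is a matrix s : Matrix (Fin n) (Fin n) R such that for all i, j and every row index a, ∑_{b} B_{ij}(a,b) = s(i,j). Then det(s) divides det(A) in R. -/
section Aux
variable {R : Type*} [CommRing R] {n m : ℕ}

private def eEquiv (n m : ℕ) : (Fin n × Fin m) ⊕ Fin n ≃ Fin n × Fin (m + 1) where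
  toFun x := match x with
    | .inl (i, a) => (i, a.succ)
    | .inr i => (i, 0)
  invFun p := Fin.cases (Sum.inr p.1) (fun a => Sum.inl (p.1, a)) p.2
  left_inv x := by rcases x with ⟨i, a⟩ | i <;> simp
  right_inv p := by
    obtain ⟨i, a⟩ := p
    refine Fin.cases ?_ (fun a => ?_) a <;> simp

theorem aux_det_dvd (A : Matrix (Fin n × Fin (m + 1)) (Fin n × Fin (m + 1)) R)
    (s : Matrix (Fin n) (Fin n) R)
    (hs : ∀ i j : Fin n, ∀ a : Fin (m + 1), ∑ b : Fin (m + 1), A (i, a) (j, b) = s i j) :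
    s.det ∣ A.det := by
  let ι := Fin n × Fin (m + 1)
  set E : Matrix ι ι R := fun r c => if r.1 = c.1 ∧ c.2 = 0 ∧ r.2 ≠ 0 then 1 else 0 with hEdef
  have hE2 : E * E = 0 := by
    ext r c
    rw [Matrix.mul_apply, Matrix.zero_apply]
    refine Finset.sum_eq_zero fun k _ => ?_
    by_cases hk : k.2 = 0 <;> simp [hEdef, hk]
  have hQP : ((1 : Matrix ι ι R) - E) * (1 + E) = 1 := by
    have h : ((1 : Matrix ι ι R) - E) * (1 + E) = 1 - E * E := by noncomm_ring; rw [smul_mul_assoc]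
    rw [h, hE2, sub_zero]
  set B : Matrix ι ι R := (1 - E) * A * (1 + E) with hBdef
  have hdet : A.det = B.det := by
    have hu : ((1 : Matrix ι ι R) - E).det * (1 + E).det = 1 := by
      rw [← Matrix.det_mul, hQP, Matrix.det_one]
    rw [hBdef, Matrix.det_mul, Matrix.det_mul]
    calc A.det = (((1 : Matrix ι ι R) - E).det * (1 + E).det) * A.det := by rw [hu, one_mul]
      _ = (1 - E).det * A.det * (1 + E).det := by ring
  -- E * A
  have hEA : ∀ (r : ι) (c : ι), (E * A) r c = if r.2 = 0 then 0 else A (r.1, 0) c := by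
    intro r c
    by_cases hr : r.2 = 0
    · simp only [hr, if_pos]
      rw [Matrix.mul_apply]
      refine Finset.sum_eq_zero fun k _ => ?_
      simp [hEdef, hr]
    · simp only [hr, if_neg, if_false]
      rw [Matrix.mul_apply, Fintype.sum_prod_type]
      simp [hEdef, hr, ite_and, Finset.sum_ite_eq, Finset.sum_ite_eq']
  -- key column computation
  have key : ∀ (r : ι) (j : Fin n), B r (j, 0) = if r.2 = 0 then s r.1 j else 0 := by
    rintro ⟨ri, ra⟩ j
    show B (ri, ra) (j, 0) = if ra = 0 then s ri j else 0
    set r : ι := (ri, ra) with hrdef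
    have h1 : ∀ k : ι, ((1 : Matrix ι ι R) + E) k (j, 0) = if k.1 = j then 1 else 0 := by
      intro k
      rcases k with ⟨ki, ka⟩
      rw [Matrix.add_apply]
      by_cases h : ki = j
      · by_cases ha : ka = 0 <;>
          simp [hEdef, Matrix.add_apply, Matrix.one_apply, Prod.ext_iff, h, ha]
      · simp [hEdef, Matrix.add_apply, Matrix.one_apply, Prod.ext_iff, h]
    rw [hBdef, Matrix.mul_apply]
    simp only [h1, mul_ite, mul_one, mul_zero]
    rw [Fintype.sum_prod_type]
    have hcollapse : (∑ x : Fin n, ∑ x₁ : Fin (m + 1),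
        if x = j then ((1 - E) * A) r (x, x₁) else 0)
        = ∑ x₁ : Fin (m + 1), ((1 - E) * A) r (j, x₁) := by
      rw [Finset.sum_congr rfl (fun x _ => show _ = if x = j then
          ∑ x₁ : Fin (m + 1), ((1 - E) * A) r (x, x₁) else 0 from by split <;> simp)]
      simp [Finset.sum_ite_eq']
    rw [hcollapse]
    have h2 : ∀ b : Fin (m+1), ((1 - E) * A) r (j, b) = A r (j, b) - (E * A) r (j, b) := by
      intro b
      rw [Matrix.sub_mul, Matrix.one_mul, Matrix.sub_apply]
    rw [Finset.sum_congr rfl fun b _ => h2 b, Finset.sum_sub_distrib]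
    simp only [hEA]
    by_cases hr : ra = 0
    · simp only [hrdef, hr, if_pos, Finset.sum_const_zero, sub_zero]
      exact hs ri j 0
    · simp only [hrdef, hr, if_neg, if_false]
      rw [hs ri j ra, hs ri j 0, sub_self]
  -- reindex to a block triangular matrix
  have hsub : B.submatrix (eEquiv n m) (eEquiv n m) =
      Matrix.fromBlocks
        (fun p q : Fin n × Fin m => B (p.1, p.2.succ) (q.1, q.2.succ)) 0
        (fun (i : Fin n) (q : Fin n × Fin m) => B (i, 0) (q.1, q.2.succ)) s := by
    ext rr cc
    rcases rr with ⟨ri, ra⟩ | ri <;> rcases cc with ⟨ci, ca⟩ | ci <;>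
      simp [eEquiv, key, Fin.succ_ne_zero, Matrix.fromBlocks]
  have hdet2 : B.det = (Matrix.fromBlocks
        (fun p q : Fin n × Fin m => B (p.1, p.2.succ) (q.1, q.2.succ)) 0
        (fun (i : Fin n) (q : Fin n × Fin m) => B (i, 0) (q.1, q.2.succ)) s).det := by
    rw [← hsub, Matrix.det_submatrix_equiv_self]
  rw [hdet, hdet2]
  exact Dvd.intro_left _ (Matrix.det_fromBlocks_zero₁₂ _ _ _).symm
end Aux

/-- If a block matrix `A` (an `n×n` array of `N×N` blocks) has blocks with
constant row sums given by the matrix `s`, then `det s` divides `det A`. -/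
theorem det_blockRowSums_dvd_det
    (R : Type*) [CommRing R] (n N : ℕ) (hn : 0 < n) (hN : 0 < N)
    (A : Matrix (Fin n × Fin N) (Fin n × Fin N) R)
    (s : Matrix (Fin n) (Fin n) R)
    (hs : ∀ i j : Fin n, ∀ a : Fin N, ∑ b : Fin N, A (i, a) (j, b) = s i j) :
    s.det ∣ A.det := by
  obtain ⟨m, rfl⟩ : ∃ m, N = m + 1 := ⟨N - 1, (Nat.succ_pred_eq_of_pos hN).symm⟩
  exact aux_det_dvd A s hs
end

section
/- Let R be a commutative ring, let n and N be natural numbers, and let B, C : Matrix (Fin n) (Fin n) R be square matrices such that C has at most N nonzero rows (there is a finite set S of row indices with card S ≤ N such that every row of C with index outside S is zero). Then there exist c_0, c_1, …, c_N ∈ R such that for every q ∈ R, det(B + q • C) = ∑_{k=0}^{N} c_k · q^k. -/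
/-- If `C` has at most `N` nonzero rows, then `det (B + q • C)` is a polynomial
of degree at most `N` in `q`. -/
theorem det_add_smul_eq_poly_of_few_rows
    (R : Type*) [CommRing R] (n N : ℕ)
    (B C : Matrix (Fin n) (Fin n) R)
    (hC : ∃ S : Finset (Fin n), S.card ≤ N ∧ ∀ i ∉ S, ∀ j, C i j = 0) :
    ∃ c : ℕ → R, ∀ q : R,
      (B + q • C).det = ∑ k ∈ Finset.range (N + 1), c k * q ^ k := by
  obtain ⟨S, hS, hrow⟩ := hC
  set M : Matrix (Fin n) (Fin n) (Polynomial R) :=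
    B.map Polynomial.C + (Polynomial.X : Polynomial R) • C.map Polynomial.C with hM
  -- entry degree bound
  have hentry : ∀ i j, (M i j).natDegree ≤ if i ∈ S then 1 else 0 := by
    intro i j
    by_cases hi : i ∈ S
    · simp only [hi, if_true, hM]
      simp only [Matrix.add_apply, Matrix.smul_apply, Matrix.map_apply, smul_eq_mul]
      refine le_trans (Polynomial.natDegree_add_le _ _) ?_
      simp only [Polynomial.natDegree_C, max_le_iff]
      refine ⟨by omega, le_trans (Polynomial.natDegree_mul_le) ?_⟩
      simpa using Polynomial.natDegree_X_le
    · simp only [hi, if_false, hM]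
      simp [Matrix.add_apply, Matrix.smul_apply, Matrix.map_apply, hrow i hi j]
  have hdeg : M.det.natDegree ≤ N := by
    rw [Matrix.det_apply]
    refine le_trans (Polynomial.natDegree_sum_le _ _) ?_
    rw [Finset.fold_max_le]
    refine ⟨Nat.zero_le _, fun σ _ => ?_⟩
    have h1 : (Equiv.Perm.sign σ • ∏ i, M (σ i) i).natDegree
        ≤ (∏ i, M (σ i) i).natDegree := by
      rcases Int.units_eq_one_or (Equiv.Perm.sign σ) with h | h <;>
        simp [h, Polynomial.natDegree_neg]
    refine le_trans h1 (le_trans (Polynomial.natDegree_prod_le _ _) ?_)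
    calc ∑ i, (M (σ i) i).natDegree ≤ ∑ i, if σ i ∈ S then 1 else 0 :=
          Finset.sum_le_sum (fun i _ => hentry (σ i) i)
      _ = ∑ i, if i ∈ S then 1 else 0 :=
          Fintype.sum_equiv σ _ _ (fun i => rfl)
      _ = S.card := by rw [Finset.sum_ite_mem]; simp
      _ ≤ N := hS
  refine ⟨fun k => M.det.coeff k, fun q => ?_⟩
  have heval : Polynomial.eval q M.det = (B + q • C).det := by
    rw [← Polynomial.coe_evalRingHom, RingHom.map_det]
    congr 1
    ext i j
    show Polynomial.eval q (M i j) = _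
    rw [hM]
    rw [Matrix.add_apply, Matrix.smul_apply, Matrix.map_apply, Matrix.map_apply,
      Matrix.add_apply, Matrix.smul_apply]
    rw [smul_eq_mul, Polynomial.eval_add, Polynomial.eval_C, Polynomial.eval_mul,
      Polynomial.eval_X, Polynomial.eval_C, smul_eq_mul, mul_comm]
  rw [← heval, Polynomial.eval_eq_sum_range' (Nat.lt_succ_of_le hdeg)]
end
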